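/- Let n ≥ 3. The subgroup of W(C̃_n) generated by r_1, r_2, …, r_n, s is exactly {w ∈ W(C̃_n) : Σw is even} = W(B̃_n), and this subgroup has index 2 in W(C̃_n). -/

import Mathlib

noncomputable section

open Equiv Finset

/-- Points `±1, …, ±n`, encoded as a sign together with an index. -/
abbrev Pt (n : ℕ) := ℤˣ × Fin n

/-- Negation of a point. -/
def negPt {n : ℕ} (x : Pt n) : Pt n := (-x.1, x.2)

/-- The hyperoctahedral group `H_n` of signed permutations: bijections `σ` of `{±1,…,±n}`
with `σ(-i) = -σ(i)`. -/
def Hgrp (n : ℕ) : Subgroup (Equiv.Perm (Pt n)) where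
  carrier := {σ | ∀ x, σ (negPt x) = negPt (σ x)}
  one_mem' := fun _ => rfl
  mul_mem' := by
    intro σ τ hσ hτ x
    have hσ' : ∀ y, σ (negPt y) = negPt (σ y) := hσ
    have hτ' : ∀ y, τ (negPt y) = negPt (τ y) := hτ
    simp only [Equiv.Perm.mul_apply]
    rw [hτ' x, hσ' (τ x)]
  inv_mem' := by
    intro σ hσ x
    have hσ' : ∀ y, σ (negPt y) = negPt (σ y) := hσ
    apply σ.injective
    rw [hσ']
    simp

lemma Hgrp_apply {n : ℕ} {σ : Equiv.Perm (Pt n)} (hσ : σ ∈ Hgrp n) (δ : ℤˣ) (k : Fin n) :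
    σ (δ, k) = (δ * (σ (1, k)).1, (σ (1, k)).2) := by
  have hσ' : ∀ y, σ (negPt y) = negPt (σ y) := hσ
  rcases Int.units_eq_one_or δ with h | h <;> subst h
  · simp
  · have h2 := hσ' (1, k)
    simp only [negPt] at h2
    simpa using h2

/-- The (right) action of a signed permutation on integer vectors:
`(v^σ)_j = ε·v_i` whenever `σ(i) = ε j`. -/
def actV {n : ℕ} (σ : Equiv.Perm (Pt n)) (v : Fin n → ℤ) : Fin n → ℤ :=
  fun j => ((σ (1, j)).1 : ℤ) * v (σ (1, j)).2

lemma actV_add {n : ℕ} (σ : Equiv.Perm (Pt n)) (a b : Fin n → ℤ) :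
    actV σ (a + b) = actV σ a + actV σ b := by
  funext j; simp [actV, mul_add]

lemma actV_zero {n : ℕ} (σ : Equiv.Perm (Pt n)) : actV σ 0 = 0 := by
  funext j; simp [actV]

lemma actV_neg {n : ℕ} (σ : Equiv.Perm (Pt n)) (v : Fin n → ℤ) :
    actV σ (-v) = -actV σ v := by
  funext j; simp [actV]

lemma actV_one {n : ℕ} (v : Fin n → ℤ) : actV 1 v = v := by
  funext j; simp [actV]

lemma actV_mul {n : ℕ} {σ : Equiv.Perm (Pt n)} (hσ : σ ∈ Hgrp n) (τ : Equiv.Perm (Pt n))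
    (v : Fin n → ℤ) : actV (σ * τ) v = actV τ (actV σ v) := by
  funext j
  have h := Hgrp_apply hσ (τ (1, j)).1 (τ (1, j)).2
  rw [Prod.mk.eta] at h
  simp only [actV, Equiv.Perm.mul_apply, h]
  push_cast
  ring

/-- The affine Weyl group of type `C̃ₙ`: pairs `(σ, v)` with `σ` a signed permutation and
`v ∈ ℤⁿ`, with multiplication `(σ,v)(τ,u) = (στ, v^τ + u)`. -/
@[ext] structure WC (n : ℕ) where
  sigma : Hgrp n
  vec : Fin n → ℤ

namespace WC

variable {n : ℕ}

instance : Mul (WC n) :=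
  ⟨fun x y => ⟨x.sigma * y.sigma, actV (y.sigma : Equiv.Perm (Pt n)) x.vec + y.vec⟩⟩

instance : One (WC n) := ⟨⟨1, 0⟩⟩

instance : Inv (WC n) :=
  ⟨fun x => ⟨x.sigma⁻¹, -actV ((x.sigma⁻¹ : Hgrp n) : Equiv.Perm (Pt n)) x.vec⟩⟩

@[simp] lemma mul_sigma (x y : WC n) : (x * y).sigma = x.sigma * y.sigma := rfl
@[simp] lemma mul_vec (x y : WC n) :
    (x * y).vec = actV (y.sigma : Equiv.Perm (Pt n)) x.vec + y.vec := rfl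
@[simp] lemma one_sigma : (1 : WC n).sigma = 1 := rfl
@[simp] lemma one_vec : (1 : WC n).vec = 0 := rfl
@[simp] lemma inv_sigma (x : WC n) : (x⁻¹).sigma = x.sigma⁻¹ := rfl
@[simp] lemma inv_vec (x : WC n) :
    (x⁻¹).vec = -actV ((x.sigma⁻¹ : Hgrp n) : Equiv.Perm (Pt n)) x.vec := rfl

instance : Group (WC n) where
  mul_assoc a b c := by
    refine WC.ext ?_ ?_
    · exact mul_assoc _ _ _
    · show actV (c.sigma : Equiv.Perm (Pt n))
          (actV (b.sigma : Equiv.Perm (Pt n)) a.vec + b.vec) + c.vec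
        = actV (((b.sigma * c.sigma : Hgrp n)) : Equiv.Perm (Pt n)) a.vec
          + (actV (c.sigma : Equiv.Perm (Pt n)) b.vec + c.vec)
      rw [actV_add]
      have hc : (((b.sigma * c.sigma : Hgrp n)) : Equiv.Perm (Pt n))
          = (b.sigma : Equiv.Perm (Pt n)) * (c.sigma : Equiv.Perm (Pt n)) := rfl
      rw [hc, actV_mul b.sigma.2]
      abel
  one_mul a := by
    refine WC.ext (one_mul _) ?_
    show actV (a.sigma : Equiv.Perm (Pt n)) 0 + a.vec = a.vec
    rw [actV_zero, zero_add]
  mul_one a := by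
    refine WC.ext (mul_one _) ?_
    show actV ((1 : Hgrp n) : Equiv.Perm (Pt n)) a.vec + 0 = a.vec
    have h1 : ((1 : Hgrp n) : Equiv.Perm (Pt n)) = 1 := rfl
    rw [h1, actV_one, add_zero]
  inv_mul_cancel a := by
    refine WC.ext (inv_mul_cancel _) ?_
    show actV (a.sigma : Equiv.Perm (Pt n))
        (-actV ((a.sigma⁻¹ : Hgrp n) : Equiv.Perm (Pt n)) a.vec) + a.vec = 0
    rw [actV_neg, ← actV_mul (a.sigma⁻¹ : Hgrp n).2]
    have h1 : ((a.sigma⁻¹ : Hgrp n) : Equiv.Perm (Pt n)) * (a.sigma : Equiv.Perm (Pt n)) = 1 := by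
      rw [← Subgroup.coe_mul, inv_mul_cancel, Subgroup.coe_one]
    rw [h1, actV_one, neg_add_cancel]

end WC

/-- `Σw`: the coordinate sum of the translation part. -/
def sumV {n : ℕ} (x : WC n) : ℤ := ∑ i, x.vec i

/-- `minus(w)`: the number of `i ∈ {1,…,n}` with `σ(i) < 0`. -/
def minusCard {n : ℕ} (x : WC n) : ℕ :=
  (Finset.univ.filter fun i : Fin n => ((x.sigma : Equiv.Perm (Pt n)) (1, i)).1 = -1).card
lemma permOf_bij {n : ℕ} (σ : Hgrp n) :
    Function.Bijective (fun i : Fin n => ((σ : Equiv.Perm (Pt n)) (1, i)).2) := by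
  rw [Fintype.bijective_iff_injective_and_card]
  refine ⟨?_, rfl⟩
  intro i j hij
  simp only at hij
  have hmem : ∀ y, (σ : Equiv.Perm (Pt n)) (negPt y) = negPt ((σ : Equiv.Perm (Pt n)) y) := σ.2
  by_cases h1 : ((σ : Equiv.Perm (Pt n)) (1, i)).1 = ((σ : Equiv.Perm (Pt n)) (1, j)).1
  · have heq : (σ : Equiv.Perm (Pt n)) (1, i) = (σ : Equiv.Perm (Pt n)) (1, j) :=
      Prod.ext h1 hij
    have h2 := (σ : Equiv.Perm (Pt n)).injective heq
    exact congrArg Prod.snd h2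
  · exfalso
    have hfst : ((σ : Equiv.Perm (Pt n)) (1, i)).1 = -((σ : Equiv.Perm (Pt n)) (1, j)).1 := by
      rcases Int.units_eq_one_or ((σ : Equiv.Perm (Pt n)) (1, i)).1 with ha | ha <;>
        rcases Int.units_eq_one_or ((σ : Equiv.Perm (Pt n)) (1, j)).1 with hb | hb <;>
        first
          | exact absurd (ha.trans hb.symm) h1
          | simp [ha, hb]
    have hne : (σ : Equiv.Perm (Pt n)) (1, i) = negPt ((σ : Equiv.Perm (Pt n)) (1, j)) :=
      Prod.ext hfst hij
    rw [← hmem (1, j)] at hne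
    have h3 := (σ : Equiv.Perm (Pt n)).injective hne
    have h4 := congrArg Prod.fst h3
    simp only [negPt] at h4
    exact absurd h4 (by decide)

/-- The underlying (unsigned) permutation of `{1,…,n}` induced by a signed permutation. -/
def permOf {n : ℕ} (σ : Hgrp n) : Equiv.Perm (Fin n) :=
  Equiv.ofBijective _ (permOf_bij σ)

@[simp] lemma permOf_apply {n : ℕ} (σ : Hgrp n) (i : Fin n) :
    permOf σ i = ((σ : Equiv.Perm (Pt n)) (1, i)).2 := rfl

lemma unitsCast_zmod2 (ε : ℤˣ) : (((ε : ℤ) : ZMod 2)) = 1 := by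
  rcases Int.units_eq_one_or ε with h | h <;> subst h <;> decide

lemma sumV_mul {n : ℕ} (x y : WC n) :
    ((sumV (x * y) : ℤ) : ZMod 2) = ((sumV x : ℤ) : ZMod 2) + ((sumV y : ℤ) : ZMod 2) := by
  have key : ∀ (σ : Hgrp n) (v : Fin n → ℤ),
      (∑ i, ((actV (σ : Equiv.Perm (Pt n)) v i : ℤ) : ZMod 2)) = ∑ i, ((v i : ℤ) : ZMod 2) := by
    intro σ v
    have hterm : ∀ i, ((actV (σ : Equiv.Perm (Pt n)) v i : ℤ) : ZMod 2)
        = ((v (permOf σ i) : ℤ) : ZMod 2) := by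
      intro i
      show ((((((σ : Equiv.Perm (Pt n)) (1, i)).1 : ℤ)) * v (((σ : Equiv.Perm (Pt n)) (1, i)).2) : ℤ) : ZMod 2) = _
      push_cast
      rw [unitsCast_zmod2, one_mul]
      rfl
    rw [Finset.sum_congr rfl (fun i _ => hterm i)]
    exact Equiv.sum_comp (permOf σ) (fun i => ((v i : ℤ) : ZMod 2))
  have hvec : (x * y).vec = actV (y.sigma : Equiv.Perm (Pt n)) x.vec + y.vec := rfl
  unfold sumV
  rw [hvec]
  have hsplit : (∑ i, (actV (y.sigma : Equiv.Perm (Pt n)) x.vec + y.vec) i)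
      = (∑ i, actV (y.sigma : Equiv.Perm (Pt n)) x.vec i) + ∑ i, y.vec i := by
    rw [← Finset.sum_add_distrib]; rfl
  rw [hsplit]
  push_cast
  rw [key y.sigma x.vec]

lemma minusCard_one {n : ℕ} : minusCard (1 : WC n) = 0 := by
  unfold minusCard
  rw [Finset.card_eq_zero, Finset.filter_eq_empty_iff]
  intro i _
  show ¬ (((1 : Hgrp n) : Equiv.Perm (Pt n)) (1, i)).1 = -1
  simp only [OneMemClass.coe_one, Equiv.Perm.one_apply]
  decide

lemma ite_units_mul (u w : ℤˣ) :
    ((if u * w = -1 then (1 : ZMod 2) else 0)) =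
      (if u = -1 then (1 : ZMod 2) else 0) + (if w = -1 then (1 : ZMod 2) else 0) := by
  rcases Int.units_eq_one_or u with h | h <;> rcases Int.units_eq_one_or w with h' | h' <;>
    subst h <;> subst h' <;> decide

lemma minusCard_mul {n : ℕ} (x y : WC n) :
    ((minusCard (x * y) : ℕ) : ZMod 2) = (minusCard x : ZMod 2) + (minusCard y : ZMod 2) := by
  have hσ : ∀ i : Fin n, ((x * y).sigma : Equiv.Perm (Pt n)) (1, i)
      = (x.sigma : Equiv.Perm (Pt n)) ((y.sigma : Equiv.Perm (Pt n)) (1, i)) := fun i => rfl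
  unfold minusCard
  rw [Finset.card_filter, Finset.card_filter, Finset.card_filter]
  push_cast
  have step : ∀ i : Fin n,
      ((if (((x * y).sigma : Equiv.Perm (Pt n)) (1, i)).1 = -1 then (1 : ZMod 2) else 0))
      = (if ((y.sigma : Equiv.Perm (Pt n)) (1, i)).1 = -1 then (1 : ZMod 2) else 0)
        + (if ((x.sigma : Equiv.Perm (Pt n)) (1, permOf y.sigma i)).1 = -1
            then (1 : ZMod 2) else 0) := by
    intro i
    rw [hσ i]
    have h := Hgrp_apply x.sigma.2 ((y.sigma : Equiv.Perm (Pt n)) (1, i)).1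
      ((y.sigma : Equiv.Perm (Pt n)) (1, i)).2
    rw [Prod.mk.eta] at h
    rw [h]
    exact ite_units_mul _ _
  calc (∑ i : Fin n, if (((x * y).sigma : Equiv.Perm (Pt n)) (1, i)).1 = -1
          then (1 : ZMod 2) else 0)
      = ∑ i : Fin n, ((if ((y.sigma : Equiv.Perm (Pt n)) (1, i)).1 = -1 then (1 : ZMod 2) else 0)
        + (if ((x.sigma : Equiv.Perm (Pt n)) (1, permOf y.sigma i)).1 = -1
            then (1 : ZMod 2) else 0)) := Finset.sum_congr rfl (fun i _ => step i)
    _ = (∑ i : Fin n, if ((y.sigma : Equiv.Perm (Pt n)) (1, i)).1 = -1 then (1 : ZMod 2) else 0)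
        + ∑ i : Fin n, (if ((x.sigma : Equiv.Perm (Pt n)) (1, permOf y.sigma i)).1 = -1
            then (1 : ZMod 2) else 0) := Finset.sum_add_distrib
    _ = (∑ i : Fin n, if ((x.sigma : Equiv.Perm (Pt n)) (1, i)).1 = -1 then (1 : ZMod 2) else 0)
        + ∑ i : Fin n, (if ((y.sigma : Equiv.Perm (Pt n)) (1, i)).1 = -1
            then (1 : ZMod 2) else 0) := by
          rw [add_comm]
          congr 1
          exact Equiv.sum_comp (permOf y.sigma)
            (fun k => if ((x.sigma : Equiv.Perm (Pt n)) (1, k)).1 = -1 then (1 : ZMod 2) else 0)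
lemma even_int_iff_zmod {a : ℤ} : Even a ↔ ((a : ZMod 2) = 0) := by
  rw [ZMod.intCast_zmod_eq_zero_iff_dvd a 2, Int.even_iff]
  push_cast
  omega

lemma sumV_one {n : ℕ} : sumV (1 : WC n) = 0 := by simp [sumV]

/-- The affine Weyl group of type `B̃ₙ`: the elements `w` of `W(C̃ₙ)` with `Σw` even. -/
def WB (n : ℕ) : Subgroup (WC n) where
  carrier := {w | Even (sumV w)}
  one_mem' := by
    show Even (sumV (1 : WC n))
    rw [sumV_one]
    exact Even.zero
  mul_mem' := by
    intro a b ha hb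
    have ha' : ((sumV a : ℤ) : ZMod 2) = 0 := even_int_iff_zmod.mp ha
    have hb' : ((sumV b : ℤ) : ZMod 2) = 0 := even_int_iff_zmod.mp hb
    refine even_int_iff_zmod.mpr ?_
    rw [sumV_mul, ha', hb', add_zero]
  inv_mem' := by
    intro a ha
    have ha' : ((sumV a : ℤ) : ZMod 2) = 0 := even_int_iff_zmod.mp ha
    refine even_int_iff_zmod.mpr ?_
    have h1 := sumV_mul a⁻¹ a
    rw [inv_mul_cancel, sumV_one, ha', add_zero] at h1
    simpa using h1.symm

lemma intModEq_two_iff {a b : ℤ} : a ≡ b [ZMOD 2] ↔ ((a : ZMod 2) = (b : ZMod 2)) :=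
  (ZMod.intCast_eq_intCast_iff a b 2).symm

/-- The second copy `B̄(B̃ₙ)` of the affine Weyl group of type `B̃ₙ` inside `W(C̃ₙ)`:
elements with `Σw ≡ minus(w) (mod 2)`. -/
def Bbar (n : ℕ) : Subgroup (WC n) where
  carrier := {w | sumV w ≡ (minusCard w : ℤ) [ZMOD 2]}
  one_mem' := by
    show sumV (1 : WC n) ≡ ((minusCard (1 : WC n) : ℤ)) [ZMOD 2]
    rw [sumV_one, minusCard_one]
    rfl
  mul_mem' := by
    intro a b ha hb
    have ha' := intModEq_two_iff.mp ha
    have hb' := intModEq_two_iff.mp hb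
    refine intModEq_two_iff.mpr ?_
    rw [sumV_mul, ha', hb']
    push_cast at ha' hb' ⊢
    rw [minusCard_mul]
  inv_mem' := by
    intro a ha
    have ha' := intModEq_two_iff.mp ha
    refine intModEq_two_iff.mpr ?_
    have h1 := sumV_mul a⁻¹ a
    have h2 := minusCard_mul a⁻¹ a
    rw [inv_mul_cancel, sumV_one] at h1
    rw [inv_mul_cancel, minusCard_one] at h2
    push_cast at ha' h1 h2 ⊢
    linear_combination h1.symm - h2.symm - ha'

/-- The affine Weyl group of type `D̃ₙ`, as the intersection of the two `B̃ₙ`'s. -/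
def WD (n : ℕ) : Subgroup (WC n) := WB n ⊓ Bbar n

instance : DecidablePred (fun k : ℤ => Even k) := fun _ => decidable_of_iff _ Int.even_iff.symm
instance : DecidablePred (fun k : ℤ => Odd k) := fun _ => decidable_of_iff _ Int.odd_iff.symm

/-- The labelled cycle type `(m, k_e, k_o, l)` of an element of `W(C̃ₙ)` (intended for
involutions): `m` is the number of 2-cycles of `σ`, `k_e` (resp. `k_o`) is the number of
`i` with `σ(i) = -i` whose label `v_i` is even (resp. odd), and `l` is the number of fixed
points of `σ`. -/
def lct {n : ℕ} (x : WC n) : ℕ × ℕ × ℕ × ℕ :=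
  ((Finset.univ.filter fun i : Fin n => ((x.sigma : Equiv.Perm (Pt n)) (1, i)).2 ≠ i).card / 2,
   (Finset.univ.filter fun i : Fin n =>
      (x.sigma : Equiv.Perm (Pt n)) (1, i) = (-1, i) ∧ Even (x.vec i)).card,
   (Finset.univ.filter fun i : Fin n =>
      (x.sigma : Equiv.Perm (Pt n)) (1, i) = (-1, i) ∧ Odd (x.vec i)).card,
   (Finset.univ.filter fun i : Fin n => (x.sigma : Equiv.Perm (Pt n)) (1, i) = (1, i)).card)

/-- `f(x)`: twice the sum of the labels over one chosen entry of each 2-cycle (we choose the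
entry with the smaller index), plus the sum of the labels over the negative 1-cycles.  Only
its residue modulo 4 is ever used, and for involutions that residue does not depend on the
choice of entries. -/
def fval {n : ℕ} (x : WC n) : ℤ :=
  2 * (∑ i ∈ Finset.univ.filter
        (fun i : Fin n => i < ((x.sigma : Equiv.Perm (Pt n)) (1, i)).2), x.vec i)
  + ∑ i ∈ Finset.univ.filter
      (fun i : Fin n => (x.sigma : Equiv.Perm (Pt n)) (1, i) = (-1, i)), x.vec i

/-- The commuting graph on a set `X` of elements of a group: vertices are the elements
of `X`, and distinct vertices are adjacent exactly when they commute.  When `X` is a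
conjugacy class of involutions this is the commuting involution graph `C(G,X)`. -/
def commGraph {M : Type*} [Group M] (X : Set M) : SimpleGraph X where
  Adj a b := a ≠ b ∧ (a : M) * (b : M) = (b : M) * (a : M)
  symm := ⟨fun a b h => ⟨h.1.symm, h.2.symm⟩⟩
  loopless := ⟨fun a h => h.1 rfl⟩

/-- The conjugacy class of `x` under conjugation by a subgroup `G`. -/
def ConjugacyClassOf {M : Type*} [Group M] (G : Subgroup M) (x : M) : Set M :=
  {y | ∃ g ∈ G, g⁻¹ * x * g = y}

/-- `X` is a conjugacy class of involutions of the subgroup `G`. -/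
def IsInvolutionConjClass {M : Type*} [Group M] (G : Subgroup M) (X : Set M) : Prop :=
  ∃ x ∈ G, orderOf x = 2 ∧ X = ConjugacyClassOf G x

/-- Sign change at the single coordinate `k`. -/
def negAt {n : ℕ} (k : Fin n) : Equiv.Perm (Pt n) :=
  Function.Involutive.toPerm (fun p => if p.2 = k then (-p.1, p.2) else p) (by
    intro p
    by_cases h : p.2 = k <;> simp [h, Prod.ext_iff])

lemma negAt_mem {n : ℕ} (k : Fin n) : negAt k ∈ Hgrp n := by
  intro p
  show (if (negPt p).2 = k then (-(negPt p).1, (negPt p).2) else negPt p)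
      = negPt (if p.2 = k then (-p.1, p.2) else p)
  by_cases h : p.2 = k <;> simp [negPt, h]

/-- The positive transposition of the coordinates `a` and `b`. -/
def swapPos {n : ℕ} (a b : Fin n) : Equiv.Perm (Pt n) :=
  Equiv.prodCongr (Equiv.refl ℤˣ) (Equiv.swap a b)

lemma swapPos_mem {n : ℕ} (a b : Fin n) : swapPos a b ∈ Hgrp n := fun _ => rfl

/-- The negative transposition of the coordinates `a` and `b` (for `a ≠ b` it sends
`a ↦ -b` and `b ↦ -a`). -/
def negSwap {n : ℕ} (a b : Fin n) : Equiv.Perm (Pt n) := negAt b * negAt a * swapPos a b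

lemma negSwap_mem {n : ℕ} (a b : Fin n) : negSwap a b ∈ Hgrp n :=
  mul_mem (mul_mem (negAt_mem b) (negAt_mem a)) (swapPos_mem a b)

/-- Constructor for elements of `W(C̃ₙ)`. -/
def mkW {n : ℕ} (σ : Equiv.Perm (Pt n)) (h : σ ∈ Hgrp n) (v : Fin n → ℤ) : WC n := ⟨⟨σ, h⟩, v⟩

/-- The simple reflection `r₁ = (σ, 0)` with `σ(1) = -1` (take `k = 0`); more generally
`(σ, 0)` with `σ(k) = -k`. -/
def rFirstGen (n : ℕ) (k : Fin n) : WC n := mkW (negAt k) (negAt_mem k) 0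

/-- The simple reflections `rᵢ = (σ, 0)`, `2 ≤ i ≤ n`, where `σ` exchanges `a` and `b`
positively (take `a, b` adjacent). -/
def swapGen (n : ℕ) (a b : Fin n) : WC n := mkW (swapPos a b) (swapPos_mem a b) 0

/-- The simple reflection `r_{n+1} = (σ, eₙ)` with `σ(n) = -n` (take `k = n-1`). -/
def rLastGen (n : ℕ) (k : Fin n) : WC n := mkW (negAt k) (negAt_mem k) (Pi.single k 1)

/-- The reflections `s = (σ, e_{n-1} + eₙ)` (take `a = n-2`, `b = n-1`) and
`t = (σ, e₁ + e₂)` (take `a = 0`, `b = 1`), where `σ(a) = -b`, `σ(b) = -a`. -/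
def negSwapGen (n : ℕ) (a b : Fin n) : WC n :=
  mkW (negSwap a b) (negSwap_mem a b) (Pi.single a 1 + Pi.single b 1)

/-- The projection `π : W(C̃ₙ) → Hₙ`, `(σ, v) ↦ σ`. -/
def projHom (n : ℕ) : WC n →* Equiv.Perm (Pt n) where
  toFun x := (x.sigma : Equiv.Perm (Pt n))
  map_one' := rfl
  map_mul' _ _ := rfl

/-- The action of a signed permutation on real vectors. -/
def actR {n : ℕ} (σ : Equiv.Perm (Pt n)) (u : Fin n → ℝ) : Fin n → ℝ :=
  fun j => (((σ (1, j)).1 : ℤ) : ℝ) * u (σ (1, j)).2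

/-- The affine action of `w = (σ,v) ∈ W(C̃ₙ)` on `ℝⁿ`: `u ↦ u^σ + v`. -/
def affAct {n : ℕ} (x : WC n) : (Fin n → ℝ) → (Fin n → ℝ) :=
  fun u => actR (x.sigma : Equiv.Perm (Pt n)) u + fun i => ((x.vec i : ℤ) : ℝ)

/-- The affine involution `φ` of `ℝⁿ` with `φ(u)ᵢ = 1/2 - u_{n+1-i}`. -/
def phiR (n : ℕ) : (Fin n → ℝ) → (Fin n → ℝ) := fun u i => 1 / 2 - u i.rev

section AuxGen

variable {n : ℕ}

lemma negAt_apply (k : Fin n) (p : Pt n) :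
    negAt k p = if p.2 = k then (-p.1, p.2) else p := rfl

/-- Embedding of the permutations of the indices into `Hₙ`. -/
def permEmb (n : ℕ) : Equiv.Perm (Fin n) →* Hgrp n where
  toFun π := ⟨Equiv.prodCongr (Equiv.refl ℤˣ) π, fun _ => rfl⟩
  map_one' := Subtype.ext (Equiv.ext fun _ => rfl)
  map_mul' _ _ := Subtype.ext (Equiv.ext fun _ => rfl)

lemma permEmb_apply (π : Equiv.Perm (Fin n)) (p : Pt n) :
    ((permEmb n π : Hgrp n) : Equiv.Perm (Pt n)) p = (p.1, π p.2) := rfl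

/-- Embedding of `Hₙ` into `W(C̃ₙ)` (with zero translation part). -/
def pureHom (n : ℕ) : Hgrp n →* WC n where
  toFun σ := ⟨σ, 0⟩
  map_one' := rfl
  map_mul' σ τ := WC.ext rfl (by
    show (0 : Fin n → ℤ) = actV _ 0 + 0
    rw [actV_zero, add_zero])

lemma pureHom_permEmb_swap (a b : Fin n) :
    pureHom n (permEmb n (Equiv.swap a b)) = swapGen n a b := rfl

lemma pureHom_negAt (k : Fin n) :
    pureHom n ⟨negAt k, negAt_mem k⟩ = rFirstGen n k := rfl

end AuxGen
section AuxGen2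

variable {n : ℕ}

lemma negAt_conj (z k : Fin n) :
    (⟨negAt k, negAt_mem k⟩ : Hgrp n)
      = permEmb n (Equiv.swap z k) * ⟨negAt z, negAt_mem z⟩ * permEmb n (Equiv.swap z k) := by
  refine Subtype.ext (Equiv.ext fun p => ?_)
  obtain ⟨δ, i⟩ := p
  show negAt k (δ, i)
      = ((permEmb n (Equiv.swap z k) : Hgrp n) : Equiv.Perm (Pt n))
          (negAt z (((permEmb n (Equiv.swap z k) : Hgrp n) : Equiv.Perm (Pt n)) (δ, i)))
  simp only [permEmb_apply, negAt_apply]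
  have hxz : Equiv.swap z k i = z ↔ i = k := by
    rw [Equiv.apply_eq_iff_eq_symm_apply]; simp
  rw [apply_ite Prod.fst, apply_ite Prod.snd]
  simp only [hxz]
  by_cases h : i = k
  · subst h; simp [Equiv.swap_apply_right]
  · simp [h, Equiv.swap_apply_self]

lemma negSwap_apply {n : ℕ} {a b : Fin n} (hab : a ≠ b) (ε : ℤˣ) (j : Fin n) :
    negSwap a b (ε, j)
      = (if Equiv.swap a b j = a ∨ Equiv.swap a b j = b then -ε else ε, Equiv.swap a b j) := by
  show (negAt b) ((negAt a) ((swapPos a b) (ε, j)))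
      = (if Equiv.swap a b j = a ∨ Equiv.swap a b j = b then -ε else ε, Equiv.swap a b j)
  have hsp : (swapPos a b) (ε, j) = (ε, Equiv.swap a b j) := rfl
  rw [hsp]
  by_cases hja : Equiv.swap a b j = a
  · have h1 : (negAt a) (ε, Equiv.swap a b j) = (-ε, Equiv.swap a b j) := by
      rw [negAt_apply, if_pos (show ((ε, Equiv.swap a b j).2 = a) from hja)]
    rw [h1, negAt_apply,
      if_neg (show ¬((-ε, Equiv.swap a b j).2 = b) from by rw [hja] at *; exact hab),
      if_pos (Or.inl hja)]
  · have h1 : (negAt a) (ε, Equiv.swap a b j) = (ε, Equiv.swap a b j) := by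
      rw [negAt_apply, if_neg (show ¬((ε, Equiv.swap a b j).2 = a) from hja)]
    rw [h1, negAt_apply]
    by_cases hjb : Equiv.swap a b j = b
    · rw [if_pos (show ((ε, Equiv.swap a b j).2 = b) from hjb), if_pos (Or.inr hjb)]
    · rw [if_neg (show ¬((ε, Equiv.swap a b j).2 = b) from hjb), if_neg (by tauto)]

set_option maxHeartbeats 1000000 in
lemma negSwap_sq {n : ℕ} {a b : Fin n} (hab : a ≠ b) : negSwap a b * negSwap a b = 1 := by
  refine Equiv.ext fun p => ?_
  obtain ⟨δ, i⟩ := p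
  show negSwap a b (negSwap a b (δ, i)) = (δ, i)
  rw [negSwap_apply hab, negSwap_apply hab, Equiv.swap_apply_self]
  have h1 : Equiv.swap a b i = a ↔ i = b := by
    rw [Equiv.apply_eq_iff_eq_symm_apply]; simp
  have h2 : Equiv.swap a b i = b ↔ i = a := by
    rw [Equiv.apply_eq_iff_eq_symm_apply]; simp
  by_cases h : i = a ∨ i = b
  · simp [h1, h2, or_comm, h]
  · simp [h1, h2, or_comm, h]

end AuxGen2
section AuxGen3

variable {n : ℕ}

lemma trans_mul (u v : Fin n → ℤ) :
    (⟨1, u⟩ : WC n) * ⟨1, v⟩ = ⟨1, u + v⟩ := by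
  refine WC.ext (mul_one 1) ?_
  show actV ((1 : Hgrp n) : Equiv.Perm (Pt n)) u + v = u + v
  rw [show ((1 : Hgrp n) : Equiv.Perm (Pt n)) = 1 from rfl, actV_one]

lemma trans_inv (v : Fin n → ℤ) : (⟨1, v⟩ : WC n)⁻¹ = ⟨1, -v⟩ := by
  refine WC.ext (inv_one) ?_
  show -actV (((1 : Hgrp n)⁻¹ : Hgrp n) : Equiv.Perm (Pt n)) v = -v
  rw [inv_one, show ((1 : Hgrp n) : Equiv.Perm (Pt n)) = 1 from rfl, actV_one]

lemma pure_mul_trans (σ : Hgrp n) (v : Fin n → ℤ) :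
    pureHom n σ * ⟨1, v⟩ = ⟨σ, v⟩ := by
  refine WC.ext (mul_one σ) ?_
  show actV ((1 : Hgrp n) : Equiv.Perm (Pt n)) 0 + v = v
  rw [actV_zero, zero_add]

lemma conj_trans (σ : Hgrp n) (v : Fin n → ℤ) :
    pureHom n σ⁻¹ * ⟨1, v⟩ * pureHom n σ = ⟨1, actV (σ : Equiv.Perm (Pt n)) v⟩ := by
  refine WC.ext ?_ ?_
  · show σ⁻¹ * 1 * σ = 1
    group
  · show actV (σ : Equiv.Perm (Pt n)) ((pureHom n σ⁻¹ * ⟨1, v⟩).vec) + 0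
        = actV (σ : Equiv.Perm (Pt n)) v
    have hv : ((pureHom n σ⁻¹ * ⟨1, v⟩ : WC n)).vec = v := by
      show actV ((1 : Hgrp n) : Equiv.Perm (Pt n)) 0 + v = v
      rw [actV_zero, zero_add]
    rw [hv, add_zero]

/-- `actV` of a pure index permutation is composition. -/
lemma actV_permEmb (π : Equiv.Perm (Fin n)) (v : Fin n → ℤ) :
    actV ((permEmb n π : Hgrp n) : Equiv.Perm (Pt n)) v = fun j => v (π j) := by
  funext j
  show (((1 : ℤˣ) : ℤ)) * v (π j) = v (π j)
  simp

lemma actV_negAt (k : Fin n) (v : Fin n → ℤ) :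
    actV (negAt k) v = fun j => if j = k then -v k else v j := by
  funext j
  show (((negAt k (1, j)).1 : ℤˣ) : ℤ) * v ((negAt k (1, j)).2) = _
  rw [negAt_apply]
  by_cases h : j = k
  · subst h; simp
  · simp [h]

end AuxGen3
section AuxGen4

set_option maxHeartbeats 1600000 in
lemma WB_le_closure (n : ℕ) (hn : 3 ≤ n) (K : Subgroup (WC n))
    (hr1 : ∃ z : Fin n, rFirstGen n z ∈ K)
    (hadj : ∀ i i' : Fin n, (i' : ℕ) = (i : ℕ) + 1 → swapGen n i i' ∈ K)
    (hns : ∃ a b : Fin n, a ≠ b ∧ negSwapGen n a b ∈ K) :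
    WB n ≤ K := by
  classical
  obtain ⟨z, hz⟩ := hr1
  obtain ⟨a, b, hab, hsK⟩ := hns
  rw [← pureHom_negAt] at hz
  -- Step 1: adjacent transpositions
  have hswapAdj : ∀ i i' : Fin n, (i' : ℕ) = (i : ℕ) + 1 →
      pureHom n (permEmb n (Equiv.swap i i')) ∈ K := by
    intro i i' h
    rw [pureHom_permEmb_swap]; exact hadj i i' h
  -- Step 2: transpositions at distance k
  have hswapStep : ∀ (k : ℕ) (i : Fin n) (h : (i : ℕ) + k < n),
      pureHom n (permEmb n (Equiv.swap i ⟨(i : ℕ) + k, h⟩)) ∈ K := by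
    intro k
    induction k with
    | zero =>
      intro i h
      have hii : (⟨(i : ℕ) + 0, h⟩ : Fin n) = i := Fin.ext rfl
      rw [hii, Equiv.swap_self, show (Equiv.refl (Fin n)) = (1 : Equiv.Perm (Fin n)) from rfl,
        map_one, map_one]
      exact one_mem K
    | succ k ih =>
      intro i h
      rcases Nat.eq_zero_or_pos k with rfl | hk
      · exact hswapAdj i ⟨(i : ℕ) + 1, by omega⟩ rfl
      · have hbd : (i : ℕ) + k < n := by omega
        set j1 : Fin n := ⟨(i : ℕ) + k, hbd⟩ with hj1
        set j2 : Fin n := ⟨(i : ℕ) + (k + 1), h⟩ with hj2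
        have e1 : Equiv.swap j1 j2 i = i :=
          Equiv.swap_apply_of_ne_of_ne
            (Fin.ne_of_val_ne (show (i : ℕ) ≠ (i : ℕ) + k by omega))
            (Fin.ne_of_val_ne (show (i : ℕ) ≠ (i : ℕ) + (k + 1) by omega))
        have e2 : Equiv.swap j1 j2 j1 = j2 := Equiv.swap_apply_left j1 j2
        have hc := Equiv.swap_apply_apply (Equiv.swap j1 j2) i j1
        rw [e1, e2] at hc
        rw [hc, map_mul, map_mul, map_inv, map_mul, map_mul, map_inv]
        have hadj12 : pureHom n (permEmb n (Equiv.swap j1 j2)) ∈ K :=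
          hswapAdj j1 j2 (by simp [hj1, hj2]; omega)
        exact mul_mem (mul_mem hadj12 (ih i hbd)) (inv_mem hadj12)
  -- Step 3: all transpositions
  have hswapAll : ∀ x y : Fin n, pureHom n (permEmb n (Equiv.swap x y)) ∈ K := by
    have key : ∀ x y : Fin n, (x : ℕ) ≤ (y : ℕ) →
        pureHom n (permEmb n (Equiv.swap x y)) ∈ K := by
      intro x y hxy
      have hy : y = ⟨(x : ℕ) + ((y : ℕ) - (x : ℕ)), by omega⟩ := Fin.ext (by simp; omega)
      rw [hy]
      exact hswapStep _ x _
    intro x y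
    rcases le_total (x : ℕ) (y : ℕ) with h | h
    · exact key x y h
    · rw [Equiv.swap_comm]; exact key y x h
  -- Step 4: all index permutations
  have hperm : ∀ π : Equiv.Perm (Fin n), pureHom n (permEmb n π) ∈ K := by
    intro π
    have hmem : π ∈ Subgroup.closure {σ : Equiv.Perm (Fin n) | σ.IsSwap} := by
      rw [Equiv.Perm.closure_isSwap]; exact Subgroup.mem_top π
    refine Subgroup.closure_induction ?_ ?_ ?_ ?_ hmem
    · rintro σ ⟨x, y, hxy, rfl⟩; exact hswapAll x y
    · rw [map_one, map_one]; exact one_mem K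
    · intro x y _ _ hx hy; rw [map_mul, map_mul]; exact mul_mem hx hy
    · intro x _ hx; rw [map_inv, map_inv]; exact inv_mem hx
  -- Step 5: all sign changes
  have hnegAt : ∀ k : Fin n, pureHom n (⟨negAt k, negAt_mem k⟩ : Hgrp n) ∈ K := by
    intro k
    rw [negAt_conj z k, map_mul, map_mul]
    exact mul_mem (mul_mem (hswapAll z k) hz) (hswapAll z k)
  -- Step 6: index-fixing signed permutations
  have hfix : ∀ (m : ℕ) (τ : Hgrp n),
      (∀ i, (((τ : Equiv.Perm (Pt n))) (1, i)).2 = i) →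
      (Finset.univ.filter fun i : Fin n => ((τ : Equiv.Perm (Pt n)) (1, i)).1 = -1).card = m →
      pureHom n τ ∈ K := by
    intro m
    induction m with
    | zero =>
      intro τ hidx hcard
      have hfe : (Finset.univ.filter fun i : Fin n =>
          ((τ : Equiv.Perm (Pt n)) (1, i)).1 = -1) = ∅ := Finset.card_eq_zero.mp hcard
      have hτ : τ = 1 := by
        refine Subtype.ext (Equiv.ext fun p => ?_)
        obtain ⟨δ, i⟩ := p
        have hsgn : ((τ : Equiv.Perm (Pt n)) (1, i)).1 = 1 := by
          rcases Int.units_eq_one_or ((τ : Equiv.Perm (Pt n)) (1, i)).1 with hh | hh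
          · exact hh
          · exfalso
            have : i ∈ (Finset.univ.filter fun i : Fin n =>
                ((τ : Equiv.Perm (Pt n)) (1, i)).1 = -1) :=
              Finset.mem_filter.mpr ⟨Finset.mem_univ i, hh⟩
            rw [hfe] at this
            exact absurd this (Finset.notMem_empty i)
        show (τ : Equiv.Perm (Pt n)) (δ, i) = (δ, i)
        rw [Hgrp_apply τ.2 δ i, hsgn, mul_one, hidx i]
      rw [hτ, map_one]; exact one_mem K
    | succ m ih =>
      intro τ hidx hcard
      have hne : (Finset.univ.filter fun i : Fin n =>
          ((τ : Equiv.Perm (Pt n)) (1, i)).1 = -1).Nonempty := by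
        rw [← Finset.card_pos, hcard]; omega
      obtain ⟨k, hk⟩ := hne
      have hk1 : ((τ : Equiv.Perm (Pt n)) (1, k)).1 = -1 := (Finset.mem_filter.mp hk).2
      set ν : Hgrp n := ⟨negAt k, negAt_mem k⟩ with hν
      set τ' : Hgrp n := τ * ν with hτ'
      have happ : ∀ i : Fin n, ((τ' : Equiv.Perm (Pt n))) (1, i)
          = if i = k then (1, k) else (τ : Equiv.Perm (Pt n)) (1, i) := by
        intro i
        show (τ : Equiv.Perm (Pt n)) (negAt k (1, i)) = _
        rw [negAt_apply]
        by_cases hik : i = k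
        · subst hik
          rw [if_pos rfl, if_pos rfl]
          have hneg : ((- 1 : ℤˣ), i) = negPt (1, i) := rfl
          rw [hneg, τ.2 (1, i)]
          have h2 : (τ : Equiv.Perm (Pt n)) (1, i) = (-1, i) :=
            Prod.ext hk1 (hidx i)
          rw [h2]
          rfl
        · rw [if_neg hik, if_neg hik]
      have hidx' : ∀ i, (((τ' : Equiv.Perm (Pt n))) (1, i)).2 = i := by
        intro i
        rw [happ i]
        by_cases hik : i = k
        · subst hik; rw [if_pos rfl]
        · rw [if_neg hik]; exact hidx i
      have hfilt' : (Finset.univ.filter fun i : Fin n =>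
            ((τ' : Equiv.Perm (Pt n)) (1, i)).1 = -1)
          = (Finset.univ.filter fun i : Fin n =>
            ((τ : Equiv.Perm (Pt n)) (1, i)).1 = -1).erase k := by
        ext i
        rw [Finset.mem_erase, Finset.mem_filter, Finset.mem_filter, happ i]
        by_cases hik : i = k
        · subst hik
          rw [if_pos rfl]
          simp
        · rw [if_neg hik]
          simp [hik]
      have hcard' : (Finset.univ.filter fun i : Fin n =>
          ((τ' : Equiv.Perm (Pt n)) (1, i)).1 = -1).card = m := by
        rw [hfilt', Finset.card_erase_of_mem hk, hcard]
        omega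
      have hmem' : pureHom n τ' ∈ K := ih τ' hidx' hcard'
      have hsq : ν * ν = 1 := by
        refine Subtype.ext (Equiv.ext fun p => ?_)
        show negAt k (negAt k p) = p
        rw [negAt_apply k p]
        by_cases hpk : p.2 = k
        · rw [if_pos hpk, negAt_apply]
          simp [hpk, Prod.ext_iff]
        · rw [if_neg hpk, negAt_apply, if_neg hpk]
      have hback : τ' * ν = τ := by rw [hτ', mul_assoc, hsq, mul_one]
      rw [← hback, map_mul]
      exact mul_mem hmem' (hnegAt k)
  -- Step 7: all pure signed permutations
  have hpure : ∀ σ : Hgrp n, pureHom n σ ∈ K := by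
    intro σ
    set π : Equiv.Perm (Fin n) := permOf σ with hπ
    set τ : Hgrp n := σ * (permEmb n π)⁻¹ with hτ
    have hidx : ∀ i, (((τ : Equiv.Perm (Pt n))) (1, i)).2 = i := by
      intro i
      have h1 : (((permEmb n π)⁻¹ : Hgrp n) : Equiv.Perm (Pt n)) (1, i) = (1, π⁻¹ i) := by
        rw [← map_inv]
        exact permEmb_apply π⁻¹ (1, i)
      show ((σ : Equiv.Perm (Pt n)) ((((permEmb n π)⁻¹ : Hgrp n) : Equiv.Perm (Pt n)) (1, i))).2 = i
      rw [h1]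
      show permOf σ (π⁻¹ i) = i
      rw [hπ]
      exact π.apply_symm_apply i
    have hmemτ : pureHom n τ ∈ K := hfix _ τ hidx rfl
    have hback : τ * permEmb n π = σ := by rw [hτ, inv_mul_cancel_right]
    rw [← hback, map_mul]
    exact mul_mem hmemτ (hperm π)
  -- Step 8: the basic translation
  have htb : (⟨1, Pi.single a 1 + Pi.single b 1⟩ : WC n) ∈ K := by
    have heq : pureHom n (⟨negSwap a b, negSwap_mem a b⟩ : Hgrp n) * negSwapGen n a b
        = (⟨1, Pi.single a 1 + Pi.single b 1⟩ : WC n) := by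
      refine WC.ext (Subtype.ext (negSwap_sq hab)) ?_
      show actV (negSwap a b) 0 + ((Pi.single a 1 + Pi.single b 1 : Fin n → ℤ))
          = (Pi.single a 1 + Pi.single b 1 : Fin n → ℤ)
      rw [actV_zero, zero_add]
    rw [← heq]
    exact mul_mem (hpure _) hsK
  -- Step 9: translations by e_i + e_j
  have hpair : ∀ i j : Fin n, i ≠ j →
      (⟨1, Pi.single i 1 + Pi.single j 1⟩ : WC n) ∈ K := by
    intro i j hij
    set π : Equiv.Perm (Fin n) := Equiv.swap b (Equiv.swap a i j) * Equiv.swap a i with hπdef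
    have hπi : π i = a := by
      show Equiv.swap b (Equiv.swap a i j) (Equiv.swap a i i) = a
      rw [Equiv.swap_apply_right]
      refine Equiv.swap_apply_of_ne_of_ne hab ?_
      intro hc
      have h' : Equiv.swap a i j = a := hc.symm
      have hji : j = i :=
        (Equiv.swap a i).injective (h'.trans (Equiv.swap_apply_right a i).symm)
      exact hij hji.symm
    have hπj : π j = b := by
      show Equiv.swap b (Equiv.swap a i j) (Equiv.swap a i j) = b
      rw [Equiv.swap_apply_right]
    have hact : actV ((permEmb n π : Hgrp n) : Equiv.Perm (Pt n))
        (Pi.single a 1 + Pi.single b 1) = Pi.single i 1 + Pi.single j 1 := by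
      rw [actV_permEmb]
      funext j'
      have e1 : (π j' = a) ↔ (j' = i) :=
        ⟨fun h => π.injective (h.trans hπi.symm), fun h => h ▸ hπi⟩
      have e2 : (π j' = b) ↔ (j' = j) :=
        ⟨fun h => π.injective (h.trans hπj.symm), fun h => h ▸ hπj⟩
      show ((Pi.single a 1 + Pi.single b 1 : Fin n → ℤ)) (π j') = _
      simp only [Pi.add_apply, Pi.single_apply]
      rw [if_congr e1 rfl rfl, if_congr e2 rfl rfl]
    have hconj := conj_trans (permEmb n π) (Pi.single a 1 + Pi.single b 1)
    rw [hact] at hconj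
    rw [← hconj]
    exact mul_mem (mul_mem (hpure _) htb) (hpure _)
  -- Step 10: translations by e_i - e_j
  have hdiff : ∀ i j : Fin n, i ≠ j →
      (⟨1, Pi.single i 1 - Pi.single j 1⟩ : WC n) ∈ K := by
    intro i j hij
    have hact : actV ((⟨negAt j, negAt_mem j⟩ : Hgrp n) : Equiv.Perm (Pt n))
        (Pi.single i 1 + Pi.single j 1) = Pi.single i 1 - Pi.single j 1 := by
      show actV (negAt j) (Pi.single i 1 + Pi.single j 1) = _
      rw [actV_negAt]
      funext j'
      by_cases hjj : j' = j
      · subst hjj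
        rw [if_pos rfl]
        simp [Pi.single_apply, hij, Ne.symm hij]
      · rw [if_neg hjj]
        simp [Pi.single_apply, hjj]
    have hconj := conj_trans (⟨negAt j, negAt_mem j⟩ : Hgrp n) (Pi.single i 1 + Pi.single j 1)
    rw [hact] at hconj
    rw [← hconj]
    exact mul_mem (mul_mem (hpure _) (hpair i j hij)) (hpure _)
  -- Step 11: all even translations
  have hT : ∀ v : Fin n → ℤ, Even (∑ i, v i) → (⟨1, v⟩ : WC n) ∈ K := by
    intro v hv
    obtain ⟨m, hm⟩ := hv
    set i0 : Fin n := ⟨0, by omega⟩ with hi0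
    set i1 : Fin n := ⟨1, by omega⟩ with hi1
    have h01 : i0 ≠ i1 := by
      intro hc; have := congrArg Fin.val hc; simp [hi0, hi1] at this
    let T : AddSubgroup (Fin n → ℤ) :=
      { carrier := {u | (⟨1, u⟩ : WC n) ∈ K}
        zero_mem' := one_mem K
        add_mem' := by
          intro u u' hu hu'
          show (⟨1, u + u'⟩ : WC n) ∈ K
          rw [← trans_mul]
          exact mul_mem hu hu'
        neg_mem' := by
          intro u hu
          show (⟨1, -u⟩ : WC n) ∈ K
          rw [← trans_inv]
          exact inv_mem hu }
    have hdecomp : v = m • (Pi.single i0 1 + Pi.single i1 1)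
        + m • (Pi.single i0 1 - Pi.single i1 1)
        + ∑ i ∈ Finset.univ.erase i0, (v i) • (Pi.single i 1 - Pi.single i0 1) := by
      funext j
      simp only [Pi.add_apply, Pi.sub_apply, Pi.smul_apply, smul_eq_mul, Finset.sum_apply]
      by_cases hj : j = i0
      · have hs : ∑ i ∈ Finset.univ.erase i0,
            v i * ((Pi.single i 1 : Fin n → ℤ) j - (Pi.single i0 1 : Fin n → ℤ) j)
            = ∑ i ∈ Finset.univ.erase i0, -(v i) := by
          apply Finset.sum_congr rfl
          intro i hi
          have hi0 : i ≠ i0 := (Finset.mem_erase.mp hi).1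
          have e1 : (Pi.single i 1 : Fin n → ℤ) j = 0 := by
            rw [hj]; simp [Pi.single_apply, Ne.symm hi0]
          have e2 : (Pi.single i0 1 : Fin n → ℤ) j = 1 := by
            rw [hj]; simp
          rw [e1, e2]; ring
        have htot : (∑ i ∈ Finset.univ.erase i0, v i) + v i0 = ∑ i, v i :=
          Finset.sum_erase_add _ _ (Finset.mem_univ i0)
        have h00 : (Pi.single i0 1 : Fin n → ℤ) j = 1 := by rw [hj]; simp
        have h10 : (Pi.single i1 1 : Fin n → ℤ) j = 0 := by
          rw [hj]; simp [Pi.single_apply, h01]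
        have hsum0 : ∑ i ∈ Finset.univ.erase i0, v i = (m + m) - v i0 := by omega
        rw [hs, Finset.sum_neg_distrib, h00, h10, hsum0, hj]
        ring
      · have h1 : (Pi.single i0 1 : Fin n → ℤ) j = 0 := by
          simp [Pi.single_apply, hj]
        have hsum : ∑ i ∈ Finset.univ.erase i0,
            v i * ((Pi.single i 1 : Fin n → ℤ) j - (Pi.single i0 1 : Fin n → ℤ) j) = v j := by
          rw [Finset.sum_eq_single j]
          · rw [h1, Pi.single_eq_same]; ring
          · intro i hi hij2
            rw [h1]
            simp [Pi.single_apply, Ne.symm hij2]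
          · intro hj2
            exact absurd (Finset.mem_erase.mpr ⟨hj, Finset.mem_univ j⟩) hj2
        rw [hsum, h1]
        ring
    have hmemT : v ∈ T := by
      rw [hdecomp]
      refine add_mem (add_mem ?_ ?_) ?_
      · exact zsmul_mem (show (Pi.single i0 1 + Pi.single i1 1 : Fin n → ℤ) ∈ T from
          hpair i0 i1 h01) m
      · exact zsmul_mem (show (Pi.single i0 1 - Pi.single i1 1 : Fin n → ℤ) ∈ T from
          hdiff i0 i1 h01) m
      · refine AddSubgroup.sum_mem T ?_
        intro i hi
        exact zsmul_mem (show (Pi.single i 1 - Pi.single i0 1 : Fin n → ℤ) ∈ T from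
          hdiff i i0 (Finset.mem_erase.mp hi).1) (v i)
    exact hmemT
  -- Final assembly
  intro w hw
  have hv : Even (∑ i, w.vec i) := hw
  have hw' := mul_mem (hpure w.sigma) (hT w.vec hv)
  rw [pure_mul_trans] at hw'
  exact hw'

end AuxGen4
section AuxIdx

/-- The parity homomorphism `w ↦ Σw mod 2`. -/
def parHom (n : ℕ) : WC n →* Multiplicative (ZMod 2) where
  toFun x := Multiplicative.ofAdd ((sumV x : ℤ) : ZMod 2)
  map_one' := by
    show Multiplicative.ofAdd ((sumV (1 : WC n) : ℤ) : ZMod 2) = 1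
    rw [sumV_one]
    rfl
  map_mul' x y := by
    show Multiplicative.ofAdd _ = Multiplicative.ofAdd _ * Multiplicative.ofAdd _
    rw [← ofAdd_add, sumV_mul]

lemma WB_eq_ker (n : ℕ) : WB n = (parHom n).ker := by
  ext x
  show Even (sumV x) ↔ _
  rw [MonoidHom.mem_ker, even_int_iff_zmod]
  constructor
  · intro h
    show Multiplicative.ofAdd (((sumV x : ℤ) : ZMod 2)) = 1
    rw [h]
    rfl
  · intro h
    have := congrArg Multiplicative.toAdd h
    exact this

lemma sumV_rLastGen {n : ℕ} (k : Fin n) : sumV (rLastGen n k) = 1 := by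
  simp [sumV, rLastGen, mkW]

lemma parHom_surjective (n : ℕ) (hn : 1 ≤ n) : Function.Surjective (parHom n) := by
  intro c
  have h2 : ∀ a : ZMod 2, a = 0 ∨ a = 1 := by decide
  rcases h2 (Multiplicative.toAdd c) with h | h
  · refine ⟨1, ?_⟩
    rw [map_one]
    have : c = Multiplicative.ofAdd (Multiplicative.toAdd c) := rfl
    rw [this, h]
    rfl
  · refine ⟨rLastGen n ⟨0, by omega⟩, ?_⟩
    show Multiplicative.ofAdd ((sumV (rLastGen n ⟨0, by omega⟩) : ℤ) : ZMod 2) = c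
    rw [sumV_rLastGen]
    have : c = Multiplicative.ofAdd (Multiplicative.toAdd c) := rfl
    rw [this, h]
    rfl

lemma WB_index_two (n : ℕ) (hn : 1 ≤ n) : (WB n).index = 2 := by
  rw [WB_eq_ker, Subgroup.index_ker]
  have : (parHom n).range = ⊤ := MonoidHom.range_eq_top.mpr (parHom_surjective n hn)
  rw [this, Subgroup.card_top]
  rw [Nat.card_eq_fintype_card]
  rfl

end AuxIdx
theorem WB_generated_and_index_two (n : ℕ) (hn : 3 ≤ n) :
    Subgroup.closure
      ({rFirstGen n ⟨0, by omega⟩}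
        ∪ {x : WC n | ∃ j : ℕ, ∃ hj : j + 1 < n, x = swapGen n ⟨j, by omega⟩ ⟨j + 1, hj⟩}
        ∪ {negSwapGen n ⟨n - 2, by omega⟩ ⟨n - 1, by omega⟩}) = WB n ∧
    (WB n).index = 2 := by
  constructor
  · apply le_antisymm
    · rw [Subgroup.closure_le]
      rintro x hx
      rcases hx with (hx | hx) | hx
      · rcases hx with rfl
        show Even (sumV (rFirstGen n ⟨0, by omega⟩))
        have h0 : sumV (rFirstGen n (⟨0, by omega⟩ : Fin n)) = 0 := by
          simp [sumV, rFirstGen, mkW]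
        rw [h0]
        exact Even.zero
      · obtain ⟨j, hj, rfl⟩ := hx
        show Even (sumV (swapGen n ⟨j, by omega⟩ ⟨j + 1, hj⟩))
        have h0 : sumV (swapGen n (⟨j, by omega⟩ : Fin n) ⟨j + 1, hj⟩) = 0 := by
          simp [sumV, swapGen, mkW]
        rw [h0]
        exact Even.zero
      · rcases hx with rfl
        show Even (sumV (negSwapGen n ⟨n - 2, by omega⟩ ⟨n - 1, by omega⟩))
        have h2 : sumV (negSwapGen n (⟨n - 2, by omega⟩ : Fin n) ⟨n - 1, by omega⟩) = 2 := by
          simp [sumV, negSwapGen, mkW, Finset.sum_add_distrib]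
        rw [h2]
        exact ⟨1, rfl⟩
    · apply WB_le_closure n hn
      · exact ⟨⟨0, by omega⟩, Subgroup.subset_closure (Or.inl (Or.inl rfl))⟩
      · intro i i' h
        apply Subgroup.subset_closure
        refine Or.inl (Or.inr ⟨(i : ℕ), by rw [← h]; exact i'.isLt, ?_⟩)
        congr 1
        exact Fin.ext h
      · refine ⟨⟨n - 2, by omega⟩, ⟨n - 1, by omega⟩,
          Fin.ne_of_val_ne (show n - 2 ≠ n - 1 by omega), ?_⟩
        exact Subgroup.subset_closure (Or.inr rfl)
  · exact WB_index_two n (by omega)
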